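/- Let Q be the thin category of a finite linear order, W ⊆ Mor(Q) a class satisfying the 2-out-of-6 property. Suppose f: a → m, w: m₀ → m with w ∈ W, and g: m₀ → a are morphisms of Q such that the span diagram represents the identity of a in the localization, in the precise sense that g ∘ w⁻¹ ∘ f = id_a in Q[W⁻¹]. Then f ∈ W and g ∈ W. -/

import Mathlib

open CategoryTheory

/-- A class of morphisms satisfies the 2-out-of-6 property if it contains all identities
and whenever `g ∘ f ∈ W` and `h ∘ g ∈ W` for a composable triple, then
`f, g, h, h ∘ g ∘ f ∈ W`. -/
def TwoOutOfSix {C : Type*} [Category C] (W : MorphismProperty C) : Prop :=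
  (∀ X : C, W (𝟙 X)) ∧
  ∀ ⦃a b c d : C⦄ (f : a ⟶ b) (g : b ⟶ c) (h : c ⟶ d),
    W (f ≫ g) → W (g ≫ h) → W f ∧ W g ∧ W h ∧ W (f ≫ g ≫ h)

/-- The 2-out-of-6 closure of a class of morphisms: the smallest class containing `W`
and all identities which satisfies the 2-out-of-6 property. -/
inductive Closure {C : Type*} [Category C] (W : MorphismProperty C) :
    ∀ ⦃X Y : C⦄, (X ⟶ Y) → Prop
  | of {X Y : C} (f : X ⟶ Y) : W f → Closure W f
  | id (X : C) : Closure W (𝟙 X)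
  | left {a b c d : C} (f : a ⟶ b) (g : b ⟶ c) (h : c ⟶ d) :
      Closure W (f ≫ g) → Closure W (g ≫ h) → Closure W f
  | mid {a b c d : C} (f : a ⟶ b) (g : b ⟶ c) (h : c ⟶ d) :
      Closure W (f ≫ g) → Closure W (g ≫ h) → Closure W g
  | right {a b c d : C} (f : a ⟶ b) (g : b ⟶ c) (h : c ⟶ d) :
      Closure W (f ≫ g) → Closure W (g ≫ h) → Closure W h
  | comp {a b c d : C} (f : a ⟶ b) (g : b ⟶ c) (h : c ⟶ d) :
      Closure W (f ≫ g) → Closure W (g ≫ h) → Closure W (f ≫ g ≫ h)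

/-- The 2-out-of-6 closure, as a `MorphismProperty`. -/
def tosClosure {C : Type*} [Category C] (W : MorphismProperty C) : MorphismProperty C :=
  fun _ _ f => Closure W f

namespace Stmt10Aux

attribute [local instance] Classical.propDecidable

variable {n : ℕ} (W : MorphismProperty (Fin n))

/-- directed `W`-relation on `ℕ`. -/
def A (i j : ℕ) : Prop :=
  ∃ (hi : i < n) (hj : j < n) (h : (⟨i, hi⟩ : Fin n) ≤ ⟨j, hj⟩), W (homOfLE h)

def E (i j : ℕ) : Prop := A W i j ∨ A W j i

variable {W}

lemma A.le {i j : ℕ} (h : A W i j) : i ≤ j := by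
  obtain ⟨hi, hj, hle, -⟩ := h
  exact_mod_cast hle

lemma A.lt_left {i j : ℕ} (h : A W i j) : i < n := h.1
lemma A.lt_right {i j : ℕ} (h : A W i j) : j < n := h.2.1

lemma E.symm {i j : ℕ} (h : E W i j) : E W j i := h.elim Or.inr Or.inl

lemma E.lt_left {i j : ℕ} (h : E W i j) : i < n :=
  h.elim (fun h => h.lt_left) (fun h => h.lt_right)
lemma E.lt_right {i j : ℕ} (h : E W i j) : j < n :=
  h.elim (fun h => h.lt_right) (fun h => h.lt_left)

variable (hW : TwoOutOfSix W)
include hW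

lemma W_comp {a b c : Fin n} {f : a ⟶ b} {g : b ⟶ c} (hf : W f) (hg : W g) :
    W (f ≫ g) := by
  have h := hW.2 f (𝟙 b) g (by simpa) (by simpa)
  simpa using h.2.2.2

lemma W_cancel_left {a b c : Fin n} {f : a ⟶ b} {g : b ⟶ c} (hfg : W (f ≫ g)) (hg : W g) :
    W f :=
  (hW.2 f g (𝟙 c) hfg (by simpa)).1

lemma W_cancel_right {a b c : Fin n} {f : a ⟶ b} {g : b ⟶ c} (hfg : W (f ≫ g)) (hf : W f) :
    W g :=
  (hW.2 (𝟙 a) f g (by simpa) hfg).2.2.1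

lemma A_refl {i : ℕ} (hi : i < n) : A W i i :=
  ⟨hi, hi, le_refl _, by simpa using hW.1 (⟨i, hi⟩ : Fin n)⟩

lemma E_refl {i : ℕ} (hi : i < n) : E W i i := Or.inl (A_refl hW hi)

omit hW in
lemma A_of_E (hij : i ≤ j) (h : E W i j) : A W i j := by
  rcases h with h | h
  · exact h
  · have := h.le
    have hij' : i = j := le_antisymm hij this
    subst hij'
    exact h

lemma A_trans {i j k : ℕ} (h1 : A W i j) (h2 : A W j k) : A W i k := by
  obtain ⟨hi, hj, hle, hw⟩ := h1
  obtain ⟨hj', hk, hle', hw'⟩ := h2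
  refine ⟨hi, hk, le_trans hle hle', ?_⟩
  have := W_comp hW hw (show W (homOfLE hle') by convert hw' using 2)
  rwa [homOfLE_comp] at this

lemma A_cancel_left {i j k : ℕ} (hik : A W i k) (hjk : A W j k) (hij : i ≤ j) : A W i j := by
  obtain ⟨hi, hk, hle, hw⟩ := hik
  obtain ⟨hj, hk', hle', hw'⟩ := hjk
  have hle2 : (⟨i, hi⟩ : Fin n) ≤ ⟨j, hj⟩ := hij
  refine ⟨hi, hj, hle2, ?_⟩
  refine W_cancel_left hW (f := homOfLE hle2) (g := homOfLE (show (⟨j, hj⟩ : Fin n) ≤ ⟨k, hk⟩ from hle')) ?_ (by convert hw' using 2)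
  rw [homOfLE_comp]
  convert hw using 2

lemma A_cancel_right {i j k : ℕ} (hik : A W i k) (hij : A W i j) (hjk : j ≤ k) : A W j k := by
  obtain ⟨hi, hk, hle, hw⟩ := hik
  obtain ⟨hi', hj, hle', hw'⟩ := hij
  have hle2 : (⟨j, hj⟩ : Fin n) ≤ ⟨k, hk⟩ := hjk
  refine ⟨hj, hk, hle2, ?_⟩
  refine W_cancel_right hW (f := homOfLE (show (⟨i, hi⟩ : Fin n) ≤ ⟨j, hj⟩ from hle')) (g := homOfLE hle2) ?_ (by convert hw' using 2)
  rw [homOfLE_comp]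
  convert hw using 2

lemma E_trans_aux {i j k : ℕ} (hik : i ≤ k) (h1 : E W i j) (h2 : E W j k) : A W i k := by
  rcases le_total i j with hij | hij
  · rcases le_total j k with hjk | hjk
    · exact A_trans hW (A_of_E hij h1) (A_of_E hjk h2)
    · exact A_cancel_left hW (A_of_E hij h1) (A_of_E hjk h2.symm) hik
  · exact A_cancel_right hW (A_of_E (le_trans hij hik) h2) (A_of_E hij h1.symm) hik

lemma E_trans {i j k : ℕ} (h1 : E W i j) (h2 : E W j k) : E W i k := by
  rcases le_total i k with h | h
  · exact Or.inl (E_trans_aux hW h h1 h2)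
  · exact Or.inr (E_trans_aux hW h h2.symm h1.symm)

/-- The 2-out-of-6 crossing lemma. -/
lemma cross {a b c d : ℕ} (hab : a ≤ b) (hbc : b ≤ c) (hcd : c ≤ d)
    (hac : E W a c) (hbd : E W b d) : A W a b ∧ A W b c ∧ A W c d := by
  obtain ⟨ha, hc, hlac, hwac⟩ := A_of_E (le_trans hab hbc) hac
  obtain ⟨hb, hd, hlbd, hwbd⟩ := A_of_E (le_trans hbc hcd) hbd
  have h1 : (⟨a, ha⟩ : Fin n) ≤ ⟨b, hb⟩ := hab
  have h2 : (⟨b, hb⟩ : Fin n) ≤ ⟨c, hc⟩ := hbc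
  have h3 : (⟨c, hc⟩ : Fin n) ≤ ⟨d, hd⟩ := hcd
  have key := hW.2 (homOfLE h1) (homOfLE h2) (homOfLE h3)
    (by rw [homOfLE_comp]; convert hwac using 2)
    (by rw [homOfLE_comp]; convert hwbd using 2)
  exact ⟨⟨ha, hb, h1, key.1⟩, ⟨hb, hc, h2, key.2.1⟩, ⟨hc, hd, h3, key.2.2.1⟩⟩

end Stmt10Aux

namespace Stmt10Aux

attribute [local instance] Classical.propDecidable

variable {n : ℕ} {W : MorphismProperty (Fin n)}

/-- `w` is the smallest element of its `E`-class. -/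
def opens (W : MorphismProperty (Fin n)) (w : ℕ) : Prop := ∀ v, v < w → ¬ E W v w

/-- `z` is the largest element of its `E`-class. -/
def closes (W : MorphismProperty (Fin n)) (z : ℕ) : Prop := ∀ v, z < v → ¬ E W z v

/-- The label of the edge from `z` to `z+1`, in the monoid of functions `ℕ → ℕ`. -/
noncomputable def s (W : MorphismProperty (Fin n)) (z : ℕ) : Function.End ℕ :=
  fun k => (k - (if closes W z then 1 else 0)) + (if opens W (z + 1) then 1 else 0)

noncomputable def Pn (W : MorphismProperty (Fin n)) (x : ℕ) : ℕ → Function.End ℕ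
  | 0 => 1
  | (y + 1) => if x ≤ y then s W y * Pn W x y else 1

lemma Pn_of_le {x y : ℕ} (h : y ≤ x) : Pn W x y = 1 := by
  cases y with
  | zero => rfl
  | succ y => rw [Pn, if_neg (by omega)]

lemma Pn_succ {x y : ℕ} (h : x ≤ y) : Pn W x (y + 1) = s W y * Pn W x y := by
  rw [Pn, if_pos h]

lemma mul_apply (f g : Function.End ℕ) (k : ℕ) : (f * g) k = f (g k) := rfl

lemma one_apply (k : ℕ) : (1 : Function.End ℕ) k = k := rfl

lemma Pn_cocycle {x y z : ℕ} (hxy : x ≤ y) (hyz : y ≤ z) :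
    Pn W x z = Pn W y z * Pn W x y := by
  induction z, hyz using Nat.le_induction with
  | base => rw [Pn_of_le (le_refl y), one_mul]
  | succ z hyz ih =>
      rw [Pn_succ (le_trans hxy hyz), Pn_succ hyz, ih, mul_assoc]

lemma s_mono (z : ℕ) : Monotone (s W z : ℕ → ℕ) := fun a b hab => by
  unfold s
  have := Nat.sub_le_sub_right hab (if closes W z then 1 else 0)
  omega

lemma Pn_mono (x y : ℕ) : Monotone (Pn W x y : ℕ → ℕ) := by
  induction y with
  | zero => exact fun a b h => h
  | succ y ih =>
      by_cases h : x ≤ y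
      · rw [Pn_succ h]
        exact fun a b hab => s_mono (W := W) y (ih hab)
      · rw [Pn, if_neg h]; exact fun a b h => h

variable (hW : TwoOutOfSix W)
include hW

/-- Direction (i): a `W`-pair evaluates to the identity. -/
lemma Pn_eq_one_of_E {x y : ℕ} (hxy : x ≤ y) (hE : E W x y) : Pn W x y = 1 := by
  rcases eq_or_lt_of_le hxy with rfl | hlt
  · exact Pn_of_le le_rfl
  have hxn : x < n := hE.lt_left
  have hyn : y < n := hE.lt_right
  classical
  set S : ℕ → Finset ℕ := fun z =>
    (Finset.range (z + 1)).filter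
      (fun w => x < w ∧ opens W w ∧ ∃ w', z ≤ w' ∧ E W w w') with hS
  have memS : ∀ z w, w ∈ S z ↔
      (w < z + 1 ∧ (x < w ∧ opens W w ∧ ∃ w', z ≤ w' ∧ E W w w')) := by
    intro z w
    simp [hS, Finset.mem_filter, Finset.mem_range]
  -- main invariant
  have main : ∀ z, x ≤ z → z ≤ y → ∀ k, (Pn W x z : ℕ → ℕ) k = k + (S z).card := by
    intro z hxz
    induction z, hxz using Nat.le_induction with
    | base =>
        intro _ k
        have hSx : S x = ∅ := by
          ext w
          simp only [memS, Finset.notMem_empty, iff_false]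
          rintro ⟨h1, h2, -⟩
          omega
        rw [Pn_of_le le_rfl, hSx]
        simp [one_apply]
    | succ z hxz ih =>
        intro hzy k
        have hzy' : z < y := by omega
        have ihz := ih (by omega)
        rw [Pn_succ hxz, mul_apply, ihz k]
        -- now analyze the step
        by_cases hc : closes W z
        · -- z is a class-maximum
          have hxz' : ¬ E W x z := by
            intro h
            exact hc y hzy' (E_trans hW h.symm hE)
          have hxltz : x < z := by
            rcases eq_or_lt_of_le hxz with rfl | h
            · exact absurd (E_refl hW hxn) hxz'
            · exact h
          have hex : ∃ w, E W w z := ⟨z, E_refl hW (by omega)⟩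
          set μ := Nat.find hex with hμ
          have hμz : E W μ z := Nat.find_spec hex
          have hμmin : ∀ v, v < μ → ¬ E W v z := fun v hv => Nat.find_min hex hv
          have hμle : μ ≤ z := Nat.find_min' hex (E_refl hW (by omega))
          have hxμ : x < μ := by
            by_contra hh
            push_neg at hh
            exact hxz' (Or.inl (cross hW hh hxz (le_of_lt hzy') hμz hE).2.1)
          have hμopen : opens W μ := by
            intro v hv hvμ
            exact hμmin v hv (E_trans hW hvμ hμz)
          have hμS : μ ∈ S z := by
            rw [memS]
            exact ⟨by omega, hxμ, hμopen, z, le_refl _, hμz⟩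
          have hkey : S (z + 1) =
              if opens W (z + 1) then insert (z + 1) ((S z).erase μ) else (S z).erase μ := by
            ext u
            by_cases hu : u = z + 1
            · subst hu
              simp only [memS, Finset.mem_insert, Finset.mem_erase]
              constructor
              · rintro ⟨-, -, ho, -⟩
                rw [if_pos ho]
                simp
              · intro h
                have ho : opens W (z + 1) := by
                  by_contra hno
                  rw [if_neg hno] at h
                  rcases Finset.mem_erase.mp h with ⟨-, h⟩
                  rw [memS] at h
                  omega
                rw [if_pos ho] at h
                exact ⟨by omega, by omega, ho, ⟨z + 1, le_refl _, E_refl hW (by omega)⟩⟩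
            · have hmain : u ∈ S (z + 1) ↔ (u ∈ S z ∧ u ≠ μ) := by
                rw [memS, memS]
                constructor
                · rintro ⟨hu1, hu2, hu3, w', hw', hEw'⟩
                  refine ⟨⟨by omega, hu2, hu3, w', by omega, hEw'⟩, ?_⟩
                  rintro rfl
                  exact hc w' (by omega) (E_trans hW hμz.symm hEw')
                · rintro ⟨⟨hu1, hu2, hu3, w', hw', hEw'⟩, hne⟩
                  rcases eq_or_lt_of_le hw' with rfl | hw''
                  · -- witness is z itself; impossible unless u = μ
                    exfalso
                    have hμu : μ ≤ u := Nat.find_min' hex hEw'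
                    rcases eq_or_lt_of_le hμu with rfl | h
                    · exact hne rfl
                    · exact hu3 μ h (E_trans hW hμz hEw'.symm)
                  · exact ⟨by omega, hu2, hu3, w', by omega, hEw'⟩
              by_cases ho : opens W (z + 1)
              · rw [if_pos ho]
                rw [Finset.mem_insert, Finset.mem_erase]
                rw [hmain]
                constructor
                · rintro ⟨h1, h2⟩; exact Or.inr ⟨h2, h1⟩
                · rintro (h | ⟨h1, h2⟩)
                  · exact absurd h hu
                  · exact ⟨h2, h1⟩
              · rw [if_neg ho, Finset.mem_erase, hmain]
                tauto
          have hcard1 : 1 ≤ (S z).card := Finset.card_pos.mpr ⟨μ, hμS⟩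
          have hz1S : z + 1 ∉ (S z).erase μ := by
            intro h
            rcases Finset.mem_erase.mp h with ⟨-, h⟩
            rw [memS] at h
            omega
          have hcard : (S (z + 1)).card =
              (S z).card - 1 + (if opens W (z + 1) then 1 else 0) := by
            rw [hkey]
            by_cases ho : opens W (z + 1)
            · rw [if_pos ho, if_pos ho, Finset.card_insert_of_notMem hz1S,
                Finset.card_erase_of_mem hμS]
            · rw [if_neg ho, if_neg ho, Finset.card_erase_of_mem hμS]
              omega
          unfold s
          rw [if_pos hc, hcard]
          by_cases ho : opens W (z + 1)
          · rw [if_pos ho]; omega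
          · rw [if_neg ho]; omega
        · -- z is not a class-maximum
          unfold closes at hc
          push_neg at hc
          obtain ⟨v, hzv, hEzv⟩ := hc
          have hc' : ¬ closes W z := fun h => h v hzv hEzv
          have hkey : S (z + 1) = if opens W (z + 1) then insert (z + 1) (S z) else S z := by
            ext u
            by_cases hu : u = z + 1
            · subst hu
              simp only [memS]
              constructor
              · rintro ⟨-, -, ho, -⟩
                rw [if_pos ho]
                simp
              · intro h
                have ho : opens W (z + 1) := by
                  by_contra hno
                  rw [if_neg hno] at h
                  rw [memS] at h
                  omega
                rw [if_pos ho] at h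
                exact ⟨by omega, by omega, ho, ⟨z + 1, le_refl _, E_refl hW (by omega)⟩⟩
            · have hmain : u ∈ S (z + 1) ↔ u ∈ S z := by
                rw [memS, memS]
                constructor
                · rintro ⟨hu1, hu2, hu3, w', hw', hEw'⟩
                  exact ⟨by omega, hu2, hu3, w', by omega, hEw'⟩
                · rintro ⟨hu1, hu2, hu3, w', hw', hEw'⟩
                  rcases eq_or_lt_of_le hw' with rfl | hw''
                  · exact ⟨by omega, hu2, hu3, v, by omega, E_trans hW hEw' hEzv⟩
                  · exact ⟨by omega, hu2, hu3, w', by omega, hEw'⟩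
              by_cases ho : opens W (z + 1)
              · rw [if_pos ho, Finset.mem_insert, hmain]
                tauto
              · rw [if_neg ho, hmain]
            -- done
          have hz1S : z + 1 ∉ S z := by
            intro h
            rw [memS] at h
            omega
          have hcard : (S (z + 1)).card = (S z).card + (if opens W (z + 1) then 1 else 0) := by
            rw [hkey]
            by_cases ho : opens W (z + 1)
            · rw [if_pos ho, if_pos ho, Finset.card_insert_of_notMem hz1S]
            · rw [if_neg ho, if_neg ho]
              omega
          unfold s
          rw [if_neg hc', hcard]
          by_cases ho : opens W (z + 1)
          · rw [if_pos ho]; omega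
          · rw [if_neg ho]; omega
  -- conclude: S y is empty
  have hSy : S y = ∅ := by
    ext u
    simp only [memS, Finset.notMem_empty, iff_false]
    rintro ⟨hu1, hu2, hu3, w', hw', hEw'⟩
    rcases eq_or_lt_of_le (show u ≤ y by omega) with rfl | huy
    · exact hu3 x hu2 hE
    · exact hu3 x hu2 (Or.inl (cross hW (le_of_lt hu2) (le_of_lt huy) hw' hE hEw').1)
  funext k
  have := main y hxy le_rfl k
  rw [hSy] at this
  simpa [one_apply] using this

end Stmt10Aux

namespace Stmt10Aux

attribute [local instance] Classical.propDecidable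

variable {n : ℕ} {W : MorphismProperty (Fin n)}

variable (hW : TwoOutOfSix W)
include hW

/-- Direction (ii): if the path product is the identity, the endpoints are equivalent. -/
lemma E_of_Pn_eq_one : ∀ d x y, x < n → y < n → x ≤ y → y - x ≤ d →
    Pn W x y = 1 → E W x y := by
  intro d
  induction d with
  | zero =>
      intro x y hx hy hxy hd _
      have : x = y := by omega
      subst this
      exact E_refl hW hx
  | succ d ih =>
      intro x y hx hy hxy hd hP
      rcases eq_or_lt_of_le hxy with rfl | hlt
      · exact E_refl hW hx
      -- step A : x is not a class-maximum
      have hcx : ¬ closes W x := by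
        intro hc
        have hfac : Pn W x y = Pn W (x + 1) y * Pn W x (x + 1) :=
          Pn_cocycle (by omega) (by omega)
        have hPx1 : Pn W x (x + 1) = s W x := by
          rw [Pn_succ le_rfl, Pn_of_le le_rfl, mul_one]
        have h0 : (s W x : ℕ → ℕ) 0 = (s W x : ℕ → ℕ) 1 := by
          unfold s
          rw [if_pos hc]
        have : (Pn W x y : ℕ → ℕ) 0 = (Pn W x y : ℕ → ℕ) 1 := by
          rw [hfac, mul_apply, mul_apply, hPx1, h0]
        rw [hP] at this
        simp [one_apply] at this
      unfold closes at hcx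
      push_neg at hcx
      obtain ⟨x', hxx', hExx'⟩ := hcx
      -- step B : y is not a class-minimum
      have hoy : ¬ opens W y := by
        intro ho
        obtain ⟨y₁, rfl⟩ : ∃ y₁, y = y₁ + 1 := ⟨y - 1, by omega⟩
        have hfac : Pn W x (y₁ + 1) = s W y₁ * Pn W x y₁ := Pn_succ (by omega)
        have h0 : (Pn W x (y₁ + 1) : ℕ → ℕ) 0 ≠ 0 := by
          rw [hfac, mul_apply]
          unfold s
          rw [if_pos ho]
          omega
        rw [hP] at h0
        exact h0 rfl
      unfold opens at hoy
      push_neg at hoy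
      obtain ⟨y'', hy''y, hEy''y⟩ := hoy
      -- case analysis
      rcases eq_or_lt_of_le (show x + 1 ≤ x' by omega) with h | h
      · -- there is a classmate of x somewhere above
        rcases lt_trichotomy x' y with hx'y | rfl | hx'y
        · -- x' < y : recurse on [x', y]
          have h1 : Pn W x x' = 1 := Pn_eq_one_of_E hW (by omega) hExx'
          have h2 : Pn W x y = Pn W x' y * Pn W x x' := Pn_cocycle (by omega) (by omega)
          have h3 : Pn W x' y = 1 := by
            rw [h1, mul_one] at h2
            rw [← h2, hP]
          exact E_trans hW hExx' (ih x' y hExx'.lt_right hy (by omega) (by omega) h3)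
        · exact hExx'
        · -- x' > y : look at y''
          rcases lt_trichotomy x y'' with hxy'' | rfl | hxy''
          · -- x < y'' : recurse on [x, y'']
            have h1 : Pn W y'' y = 1 := Pn_eq_one_of_E hW (by omega) hEy''y
            have h2 : Pn W x y = Pn W y'' y * Pn W x y'' := Pn_cocycle (by omega) (by omega)
            have h3 : Pn W x y'' = 1 := by
              rw [h1, one_mul] at h2
              rw [← h2, hP]
            exact E_trans hW (ih x y'' hx hEy''y.lt_left (by omega) (by omega) h3) hEy''y
          · exact hEy''y
          · -- y'' < x : crossing
            exact Or.inl (cross hW (by omega : y'' ≤ x) (by omega : x ≤ y)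
              (by omega : y ≤ x') hEy''y hExx').2.1
      ·
        rcases lt_trichotomy x' y with hx'y | rfl | hx'y
        · have h1 : Pn W x x' = 1 := Pn_eq_one_of_E hW (by omega) hExx'
          have h2 : Pn W x y = Pn W x' y * Pn W x x' := Pn_cocycle (by omega) (by omega)
          have h3 : Pn W x' y = 1 := by
            rw [h1, mul_one] at h2
            rw [← h2, hP]
          exact E_trans hW hExx' (ih x' y hExx'.lt_right hy (by omega) (by omega) h3)
        · exact hExx'
        · rcases lt_trichotomy x y'' with hxy'' | rfl | hxy''
          · have h1 : Pn W y'' y = 1 := Pn_eq_one_of_E hW (by omega) hEy''y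
            have h2 : Pn W x y = Pn W y'' y * Pn W x y'' := Pn_cocycle (by omega) (by omega)
            have h3 : Pn W x y'' = 1 := by
              rw [h1, one_mul] at h2
              rw [← h2, hP]
            exact E_trans hW (ih x y'' hx hEy''y.lt_left (by omega) (by omega) h3) hEy''y
          · exact hEy''y
          · exact Or.inl (cross hW (by omega : y'' ≤ x) (by omega : x ≤ y)
              (by omega : y ≤ x') hEy''y hExx').2.1

end Stmt10Aux

namespace Stmt10Aux

variable {n : ℕ}

/-- The detecting functor into the monoid of endofunctions of `ℕ`. -/
noncomputable def Fdet (W : MorphismProperty (Fin n)) :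
    Fin n ⥤ SingleObj (Function.End ℕ) where
  obj _ := SingleObj.star _
  map {X Y} _ := (Pn W X.val Y.val : Function.End ℕ)
  map_id X := Pn_of_le le_rfl
  map_comp {X Y Z} f g := by
    have h := Pn_cocycle (W := W) (Fin.le_def.mp (leOfHom f)) (Fin.le_def.mp (leOfHom g))
    have h2 := SingleObj.comp_as_mul (M := Function.End ℕ)
      (x := SingleObj.star _) (y := SingleObj.star _) (z := SingleObj.star _)
      (Pn W X.val Y.val) (Pn W Y.val Z.val)
    exact h.trans h2.symm

variable {W : MorphismProperty (Fin n)}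

lemma W_to_A (hW : TwoOutOfSix W) {X Y : Fin n} {f : X ⟶ Y} (hf : W f) : A W X.val Y.val := by
  refine ⟨X.2, Y.2, leOfHom f, ?_⟩
  have h : (homOfLE (leOfHom f) : X ⟶ Y) = f := Subsingleton.elim _ _
  rw [h]
  exact hf

lemma Fdet_inverts (hW : TwoOutOfSix W) : W.IsInvertedBy (Fdet W) := by
  intro X Y f hf
  have h1 : (Fdet W).map f = 𝟙 (SingleObj.star (Function.End ℕ)) :=
    Pn_eq_one_of_E hW (Fin.le_def.mp (leOfHom f)) (Or.inl (W_to_A hW hf))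
  rw [h1]
  infer_instance

end Stmt10Aux


open Stmt10Aux

/-- If the span `a ⟶f m ⟵w m₀ ⟶g a` (with `w ∈ W`) represents the identity of `a` in the
localization `Q[W⁻¹]` of the thin category of a finite linear order at a 2-out-of-6 class
`W`, i.e. `g ∘ w⁻¹ ∘ f = id` there, then `f ∈ W` and `g ∈ W`. -/
theorem stmt10 (n : ℕ) (W : MorphismProperty (Fin n)) (hW : TwoOutOfSix W)
    {a m m₀ : Fin n} (f : a ⟶ m) (w : m₀ ⟶ m) (hw : W w) (g : m₀ ⟶ a)
    (q : W.Q.obj m ⟶ W.Q.obj m₀)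
    (hq1 : W.Q.map w ≫ q = 𝟙 _) (hq2 : q ≫ W.Q.map w = 𝟙 _)
    (hid : W.Q.map f ≫ q ≫ W.Q.map g = 𝟙 (W.Q.obj a)) :
    W f ∧ W g := by
  classical
  have hF := Fdet_inverts hW
  let G := Localization.Construction.lift (Fdet W) hF
  have fac : W.Q ⋙ G = Fdet W := Localization.Construction.fac (Fdet W) hF
  -- transport the localization identities through G
  have hGmap : ∀ {X Y : Fin n} (φ : X ⟶ Y),
      G.map (W.Q.map φ) = (Pn W X.val Y.val : Function.End ℕ) := by
    intro X Y φ
    have h := Functor.congr_hom fac φ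
    simpa [Fdet] using h
  -- the image of q is the identity
  have hEw : E W m₀.val m.val := Or.inl (W_to_A hW hw)
  have hPw : (Pn W m₀.val m.val : Function.End ℕ) = 1 :=
    Pn_eq_one_of_E hW (Fin.le_def.mp (leOfHom w)) hEw
  have hGq : G.map q ≫ G.map (W.Q.map w) = 𝟙 _ := by
    rw [← G.map_comp, hq2, G.map_id]
  rw [hGmap w] at hGq
  -- the main identity
  have hmain : G.map (W.Q.map f) ≫ G.map q ≫ G.map (W.Q.map g) = 𝟙 _ := by
    rw [← G.map_comp, ← G.map_comp, hid, G.map_id]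
  rw [hGmap f, hGmap g] at hmain
  -- translate to the monoid of endofunctions
  set α : Function.End ℕ := Pn W a.val m.val with hα
  set β : Function.End ℕ := Pn W m₀.val a.val with hβ
  set t : Function.End ℕ := G.map q with ht
  have hba : ∀ k : ℕ, (β : ℕ → ℕ) ((α : ℕ → ℕ) k) = k := by
    intro k
    have h1 : (β * (t * α)) = 1 := by
      have := hmain
      rw [SingleObj.comp_as_mul, SingleObj.comp_as_mul, SingleObj.id_as_one] at this
      exact this
    have h2 : t = 1 := by
      have := hGq
      rw [SingleObj.comp_as_mul, SingleObj.id_as_one, hPw] at this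
      simpa using this
    rw [h2, one_mul] at h1
    calc (β : ℕ → ℕ) ((α : ℕ → ℕ) k) = ((β * α) : ℕ → ℕ) k := rfl
      _ = k := by rw [h1]; rfl
  have hab : ∀ k : ℕ, (α : ℕ → ℕ) ((β : ℕ → ℕ) k) = k := by
    intro k
    have h1 : Pn W m₀.val m.val = α * β :=
      Pn_cocycle (Fin.le_def.mp (leOfHom g)) (Fin.le_def.mp (leOfHom f))
    rw [hPw] at h1
    calc (α : ℕ → ℕ) ((β : ℕ → ℕ) k) = ((α * β) : ℕ → ℕ) k := rfl
      _ = k := by rw [← h1]; rfl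
  -- α and β are mutually inverse monotone maps of ℕ, hence both are the identity
  have hαm : Monotone (α : ℕ → ℕ) := Pn_mono _ _
  have hβm : Monotone (β : ℕ → ℕ) := Pn_mono _ _
  have hαinj : Function.Injective (α : ℕ → ℕ) :=
    Function.LeftInverse.injective (g := (β : ℕ → ℕ)) hba
  have hβinj : Function.Injective (β : ℕ → ℕ) :=
    Function.LeftInverse.injective (g := (α : ℕ → ℕ)) hab
  have hαs : StrictMono (α : ℕ → ℕ) := hαm.strictMono_of_injective hαinj
  have hβs : StrictMono (β : ℕ → ℕ) := hβm.strictMono_of_injective hβinj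
  have hα1 : α = 1 := by
    funext k
    have h1 : k ≤ (α : ℕ → ℕ) k := hαs.le_apply
    have h2 : (α : ℕ → ℕ) k ≤ (β : ℕ → ℕ) ((α : ℕ → ℕ) k) := hβs.le_apply
    rw [hba k] at h2
    exact le_antisymm h2 h1
  -- conclude
  have hEam : E W a.val m.val :=
    E_of_Pn_eq_one hW (m.val - a.val) a.val m.val a.2 m.2
      (Fin.le_def.mp (leOfHom f)) le_rfl hα1
  have hWf : W f := by
    obtain ⟨ha, hm, hle, hw'⟩ := A_of_E (Fin.le_def.mp (leOfHom f)) hEam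
    have h : (homOfLE hle : a ⟶ m) = f := Subsingleton.elim _ _
    rwa [h] at hw'
  refine ⟨hWf, ?_⟩
  have hgf : W (g ≫ f) := by
    have h : (g ≫ f : m₀ ⟶ m) = w := Subsingleton.elim _ _
    rwa [h]
  exact W_cancel_left hW hgf hWf
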